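/- Let m ≥ 3. The dihedral group D_m of order 2m, generated by x and y with y² = x^m = 1 and yxy = x⁻¹, realizes ⟨2, 2, 2⌊m/3⌋⟩: the subsets S₁ = {1, y}, S₂ = {1, yx²}, and S₃ = {x^{3k} : 0 ≤ k < ⌈(m−2)/3⌉} ∪ {yx^{3k+1} : 0 ≤ k < ⌈(m−2)/3⌉}, of sizes 2, 2, and 2⌊m/3⌋ respectively, satisfy the triple product property. -/

import Mathlib

/-- The right quotient set `Q(S) = {s₁s₂⁻¹ : s₁, s₂ ∈ S}` of a subset of a group. -/
def rightQuotient {G : Type*} [Group G] (S : Set G) : Set G :=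
  {g | ∃ s₁ ∈ S, ∃ s₂ ∈ S, g = s₁ * s₂⁻¹}

/-- Subsets `S₁, S₂, S₃` of a group satisfy the triple product property if whenever
`qᵢ ∈ Q(Sᵢ)` and `q₁q₂q₃ = 1`, we have `q₁ = q₂ = q₃ = 1`. -/
def TPP {G : Type*} [Group G] (S₁ S₂ S₃ : Set G) : Prop :=
  ∀ q₁ ∈ rightQuotient S₁, ∀ q₂ ∈ rightQuotient S₂, ∀ q₃ ∈ rightQuotient S₃,
    q₁ * q₂ * q₃ = 1 → q₁ = 1 ∧ q₂ = 1 ∧ q₃ = 1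

/-- A group `G` realizes `⟨n₁, n₂, n₃⟩` if there are finite subsets `Sᵢ ⊆ G` with
`|Sᵢ| = nᵢ` satisfying the triple product property. -/
def Realizes (G : Type*) [Group G] (n₁ n₂ n₃ : ℕ) : Prop :=
  ∃ S₁ S₂ S₃ : Set G, S₁.Finite ∧ S₂.Finite ∧ S₃.Finite ∧
    S₁.ncard = n₁ ∧ S₂.ncard = n₂ ∧ S₃.ncard = n₃ ∧ TPP S₁ S₂ S₃

/-- The subset `S₁ = {1, y}` of the dihedral group (with `y = sr 0`). -/
def dS₁ (m : ℕ) : Set (DihedralGroup m) := {1, DihedralGroup.sr 0}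

/-- The subset `S₂ = {1, yx²}` of the dihedral group (with `yx² = sr 2`). -/
def dS₂ (m : ℕ) : Set (DihedralGroup m) := {1, DihedralGroup.sr 2}

/-- The subset `S₃ = {x^{3k} : 0 ≤ k < ⌈(m−2)/3⌉} ∪ {yx^{3k+1} : 0 ≤ k < ⌈(m−2)/3⌉}`
of the dihedral group; note that `⌈(m−2)/3⌉ = ⌊m/3⌋` for `m ≥ 2`. -/
def dS₃ (m : ℕ) : Set (DihedralGroup m) :=
  {g | ∃ k : ℕ, k < m / 3 ∧ g = DihedralGroup.r ((3 * k : ℕ) : ZMod m)} ∪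
  {g | ∃ k : ℕ, k < m / 3 ∧ g = DihedralGroup.sr ((3 * k + 1 : ℕ) : ZMod m)}

open DihedralGroup

@[simp] lemma dih_inv_r {m : ℕ} (i : ZMod m) : (r i)⁻¹ = r (-i) := rfl
@[simp] lemma dih_inv_sr {m : ℕ} (i : ZMod m) : (sr i)⁻¹ = sr i := rfl

/-- cast injectivity below `m` -/
lemma key {m : ℕ} (hm : 3 ≤ m) {a b : ℕ} (ha : a < m) (hb : b < m)
    (h : (a : ZMod m) = (b : ZMod m)) : a = b := by
  haveI : NeZero m := ⟨by omega⟩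
  have := congrArg ZMod.val h
  rwa [ZMod.val_cast_of_lt ha, ZMod.val_cast_of_lt hb] at this

/-- characterization of elements of `Q(S₃)` -/
lemma q3_form {m : ℕ} {q : DihedralGroup m} (h : q ∈ rightQuotient (dS₃ m)) :
    (∃ a b : ℕ, a < m / 3 ∧ b < m / 3 ∧
      q = r (((3 * a : ℕ) : ZMod m) - ((3 * b : ℕ) : ZMod m))) ∨
    (∃ a b : ℕ, a < m / 3 ∧ b < m / 3 ∧
      q = sr (((3 * a + 1 : ℕ) : ZMod m) - ((3 * b : ℕ) : ZMod m))) := by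
  obtain ⟨s₁, hs₁, s₂, hs₂, rfl⟩ := h
  rcases hs₁ with ⟨a, ha, rfl⟩ | ⟨a, ha, rfl⟩ <;>
    rcases hs₂ with ⟨b, hb, rfl⟩ | ⟨b, hb, rfl⟩
  · exact Or.inl ⟨a, b, ha, hb, by simp [sub_eq_add_neg]⟩
  · exact Or.inr ⟨b, a, hb, ha, by simp [sub_eq_add_neg]⟩
  · exact Or.inr ⟨a, b, ha, hb, by simp [sub_eq_add_neg]⟩
  · refine Or.inl ⟨b, a, hb, ha, ?_⟩
    simp only [dih_inv_sr, sr_mul_sr, r.injEq]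
    push_cast
    ring

lemma tpp_main (m : ℕ) (hm : 3 ≤ m) : TPP (dS₁ m) (dS₂ m) (dS₃ m) := by
  have h3n : m / 3 * 3 ≤ m := Nat.div_mul_le_self m 3
  intro q₁ hq₁ q₂ hq₂ q₃ hq₃ heq
  have hq₁' : q₁ = 1 ∨ q₁ = sr 0 := by
    obtain ⟨s₁, hs₁, s₂, hs₂, rfl⟩ := hq₁
    simp only [dS₁, Set.mem_insert_iff, Set.mem_singleton_iff] at hs₁ hs₂
    rcases hs₁ with rfl | rfl <;> rcases hs₂ with rfl | rfl <;>
      simp [one_def, -r_zero]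
  have hq₂' : q₂ = 1 ∨ q₂ = sr 2 := by
    obtain ⟨s₁, hs₁, s₂, hs₂, rfl⟩ := hq₂
    simp only [dS₂, Set.mem_insert_iff, Set.mem_singleton_iff] at hs₁ hs₂
    rcases hs₁ with rfl | rfl <;> rcases hs₂ with rfl | rfl <;>
      simp [one_def, -r_zero]
  rcases hq₁' with rfl | rfl <;> rcases hq₂' with rfl | rfl
  · -- q₁ = 1, q₂ = 1
    simp only [one_mul] at heq
    exact ⟨rfl, rfl, heq⟩
  · -- q₁ = 1, q₂ = sr 2
    exfalso
    rcases q3_form hq₃ with ⟨a, b, ha, hb, rfl⟩ | ⟨a, b, ha, hb, rfl⟩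
    · simp [one_def, -r_zero] at heq
    · rw [one_mul] at heq
      simp only [sr_mul_sr, one_def, r.injEq] at heq
      have h' : ((3 * a + 1 : ℕ) : ZMod m) = ((3 * b + 2 : ℕ) : ZMod m) := by
        push_cast at heq ⊢; linear_combination heq
      have := key hm (by omega) (by omega) h'
      omega
  · -- q₁ = sr 0, q₂ = 1
    exfalso
    rcases q3_form hq₃ with ⟨a, b, ha, hb, rfl⟩ | ⟨a, b, ha, hb, rfl⟩
    · simp [one_def, -r_zero] at heq
    · rw [mul_one] at heq
      simp only [sr_mul_sr, one_def, r.injEq] at heq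
      have h' : ((3 * a + 1 : ℕ) : ZMod m) = ((3 * b : ℕ) : ZMod m) := by
        push_cast at heq ⊢; linear_combination heq
      have := key hm (by omega) (by omega) h'
      omega
  · -- q₁ = sr 0, q₂ = sr 2
    exfalso
    rcases q3_form hq₃ with ⟨a, b, ha, hb, rfl⟩ | ⟨a, b, ha, hb, rfl⟩
    · simp only [sr_mul_sr, r_mul_r, one_def, r.injEq] at heq
      have h' : ((3 * a + 2 : ℕ) : ZMod m) = ((3 * b : ℕ) : ZMod m) := by
        push_cast at heq ⊢; linear_combination heq
      have := key hm (by omega) (by omega) h'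
      omega
    · simp [one_def, -r_zero] at heq

theorem stmt_16 (m : ℕ) (hm : 3 ≤ m) :
    (dS₁ m).ncard = 2 ∧ (dS₂ m).ncard = 2 ∧ (dS₃ m).ncard = 2 * (m / 3) ∧
    TPP (dS₁ m) (dS₂ m) (dS₃ m) ∧
    Realizes (DihedralGroup m) 2 2 (2 * (m / 3)) := by
  have h3n : m / 3 * 3 ≤ m := Nat.div_mul_le_self m 3
  have hc1 : (dS₁ m).ncard = 2 := by
    rw [dS₁, Set.ncard_pair (by simp [one_def, -r_zero])]
  have hc2 : (dS₂ m).ncard = 2 := by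
    rw [dS₂, Set.ncard_pair (by simp [one_def, -r_zero])]
  -- rewrite dS₃ as a union of images
  have hrw : dS₃ m =
      (fun k : ℕ => r ((3 * k : ℕ) : ZMod m)) '' Set.Iio (m / 3) ∪
      (fun k : ℕ => sr ((3 * k + 1 : ℕ) : ZMod m)) '' Set.Iio (m / 3) := by
    ext g
    simp only [dS₃, Set.mem_union, Set.mem_setOf_eq, Set.mem_image, Set.mem_Iio]
    constructor
    · rintro (⟨k, hk, rfl⟩ | ⟨k, hk, rfl⟩)
      exacts [Or.inl ⟨k, hk, rfl⟩, Or.inr ⟨k, hk, rfl⟩]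
    · rintro (⟨k, hk, rfl⟩ | ⟨k, hk, rfl⟩)
      exacts [Or.inl ⟨k, hk, rfl⟩, Or.inr ⟨k, hk, rfl⟩]
  have hIio : (Set.Iio (m / 3)).ncard = m / 3 := by
    rw [← Finset.coe_Iio, Set.ncard_coe_finset, Nat.card_Iio]
  have hinj1 : Set.InjOn (fun k : ℕ => r ((3 * k : ℕ) : ZMod m)) (Set.Iio (m / 3)) := by
    intro a ha b hb hab
    simp only [Set.mem_Iio] at ha hb
    simp only [r.injEq] at hab
    have := key hm (by omega) (by omega) hab
    omega
  have hinj2 : Set.InjOn (fun k : ℕ => sr ((3 * k + 1 : ℕ) : ZMod m)) (Set.Iio (m / 3)) := by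
    intro a ha b hb hab
    simp only [Set.mem_Iio] at ha hb
    simp only [sr.injEq] at hab
    have := key hm (by omega) (by omega) hab
    omega
  have hdisj : Disjoint ((fun k : ℕ => r ((3 * k : ℕ) : ZMod m)) '' Set.Iio (m / 3))
      ((fun k : ℕ => sr ((3 * k + 1 : ℕ) : ZMod m)) '' Set.Iio (m / 3)) := by
    rw [Set.disjoint_left]
    rintro g ⟨k, hk, rfl⟩ ⟨k', hk', h⟩
    simp at h
  have hfin1 : ((fun k : ℕ => r ((3 * k : ℕ) : ZMod m)) '' Set.Iio (m / 3)).Finite :=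
    (Set.finite_Iio _).image _
  have hfin2 : ((fun k : ℕ => sr ((3 * k + 1 : ℕ) : ZMod m)) '' Set.Iio (m / 3)).Finite :=
    (Set.finite_Iio _).image _
  have hc3 : (dS₃ m).ncard = 2 * (m / 3) := by
    rw [hrw, Set.ncard_union_eq hdisj hfin1 hfin2,
      Set.ncard_image_of_injOn hinj1, Set.ncard_image_of_injOn hinj2, hIio]
    ring
  have htpp := tpp_main m hm
  refine ⟨hc1, hc2, hc3, htpp, dS₁ m, dS₂ m, dS₃ m, ?_, ?_, ?_, hc1, hc2, hc3, htpp⟩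
  · exact (Set.finite_singleton _).insert _
  · exact (Set.finite_singleton _).insert _
  · rw [hrw]; exact hfin1.union hfin2
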